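/- arXiv:1104.0941 — 8 statements merged into one kernel-verified Lean document; each statement's English description precedes it below -/
import Mathlib

section
/- For d = 2 and d = 3, for every probability vector p of length d and every permutation σ, one has 1 − |∑_j λ_j p_{σ(j)}|^2 = (d/(d−1))(1 − ∑_j p_j^2), where λ_j are the stellar spectrum eigenvalues λ_j = exp(iπ(d−2j+1)/d). In particular the stellar mirror entanglement equals the linear entropy for local dimension 2 and 3. -/
open Complex Real

lemma expI_cos_sin (θ : ℝ) : Complex.exp (Complex.I * (θ : ℂ)) =
    (Real.cos θ : ℂ) + (Real.sin θ : ℂ) * Complex.I := by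
  rw [mul_comm, Complex.exp_mul_I, Complex.ofReal_cos, Complex.ofReal_sin]

/-- For local dimension `d = 2` or `d = 3`, for every probability vector `p` and every
permutation `σ`, `1 − |∑_j λ_j p_{σ(j)}|² = (d/(d−1))(1 − ∑_j p_j²)`, where `λ_j` are
the stellar spectrum eigenvalues. In particular the stellar mirror entanglement equals
the linear entropy in these dimensions. -/
theorem stellar_equals_linear_entropy_d2_d3 (d : ℕ) (hd : d = 2 ∨ d = 3)
    (p : Fin d → ℝ) (hp : ∀ j, 0 ≤ p j) (hsum : ∑ j, p j = 1)
    (lam : Fin d → ℂ)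
    (hlam : ∀ j : Fin d,
      lam j = Complex.exp (Complex.I * (π * ((d : ℝ) - 2 * ((j : ℕ) + 1) + 1) / d)))
    (σ : Equiv.Perm (Fin d)) :
    1 - ‖∑ j, lam j * (p (σ j) : ℂ)‖ ^ 2 =
      ((d : ℝ) / (d - 1)) * (1 - ∑ j, (p j) ^ 2) := by
  rcases hd with rfl | rfl
  · have hq : p (σ 0) + p (σ 1) = 1 := by
      rw [← Fin.sum_univ_two (f := fun j => p (σ j)), Equiv.sum_comp σ p]; exact hsum
    have hq2 : ∑ j, (p j) ^ 2 = p (σ 0) ^ 2 + p (σ 1) ^ 2 := by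
      rw [← Equiv.sum_comp σ (fun j => p j ^ 2), Fin.sum_univ_two]
    have h0 : lam 0 = (Real.cos (π/2) : ℂ) + (Real.sin (π/2) : ℂ) * Complex.I := by
      rw [hlam 0, ← expI_cos_sin]; congr 1; push_cast [Fin.val_zero]; ring
    have h1 : lam 1 = (Real.cos (-(π/2)) : ℂ) + (Real.sin (-(π/2)) : ℂ) * Complex.I := by
      rw [hlam 1, ← expI_cos_sin]; congr 1; push_cast [Fin.val_one]; ring
    rw [Fin.sum_univ_two, h0, h1, hq2, Complex.sq_norm]
    simp only [Real.cos_pi_div_two, Real.sin_pi_div_two, Real.cos_neg, Real.sin_neg,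
      Complex.normSq_apply, Complex.add_re, Complex.add_im, Complex.mul_re, Complex.mul_im,
      Complex.I_re, Complex.I_im, Complex.ofReal_re, Complex.ofReal_im]
    nlinarith [hq]
  · have hq : p (σ 0) + p (σ 1) + p (σ 2) = 1 := by
      rw [← Fin.sum_univ_three (f := fun j => p (σ j)), Equiv.sum_comp σ p]; exact hsum
    have hq2 : ∑ j, (p j) ^ 2 = p (σ 0) ^ 2 + p (σ 1) ^ 2 + p (σ 2) ^ 2 := by
      rw [← Equiv.sum_comp σ (fun j => p j ^ 2), Fin.sum_univ_three]
    have h0 : lam 0 = (Real.cos (π - π/3) : ℂ) + (Real.sin (π - π/3) : ℂ) * Complex.I := by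
      rw [hlam 0, ← expI_cos_sin]; congr 1; push_cast [Fin.val_zero]; ring
    have h1 : lam 1 = (Real.cos (0:ℝ) : ℂ) + (Real.sin (0:ℝ) : ℂ) * Complex.I := by
      rw [hlam 1, ← expI_cos_sin]; congr 1; push_cast [Fin.val_one]; ring
    have h2 : lam 2 = (Real.cos (-(π - π/3)) : ℂ) + (Real.sin (-(π - π/3)) : ℂ) * Complex.I := by
      rw [hlam 2, ← expI_cos_sin]; congr 1; push_cast [show ((2:Fin 3):ℕ) = 2 from rfl]; ring
    rw [Fin.sum_univ_three, h0, h1, h2, hq2, Complex.sq_norm]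
    simp only [Real.cos_pi_sub, Real.sin_pi_sub, Real.cos_pi_div_three, Real.sin_pi_div_three,
      Real.cos_neg, Real.sin_neg, Real.cos_zero, Real.sin_zero,
      Complex.normSq_apply, Complex.add_re, Complex.add_im, Complex.mul_re, Complex.mul_im,
      Complex.I_re, Complex.I_im, Complex.ofReal_re, Complex.ofReal_im]
    have hs : Real.sqrt 3 ^ 2 = 3 := Real.sq_sqrt (by norm_num)
    push_cast
    linear_combination ((p (σ 0) + p (σ 1) + p (σ 2) + 1) / 2) * hq -
      ((p (σ 0) - p (σ 2)) ^ 2 / 4) * hs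
end

section
/- The stellar mirror entanglement is bounded above by the linear entropy: for every probability vector p of length d (d ≥ 2), min over permutations σ of (1 − |∑_j ω^j p_{σ(j)}|^2) ≤ (d/(d−1))(1 − ∑_j p_j^2), where ω = e^{2πi/d}. -/
open Complex Real Finset

private lemma swap_pair_exists {α : Type*} [DecidableEq α] {m n m' n' : α}
    (h : m ≠ n) (h' : m' ≠ n') : ∃ g : Equiv.Perm α, g m' = m ∧ g n' = n := by
  set e1 := Equiv.swap m' m with he1
  have h1 : e1 m' = m := Equiv.swap_apply_left _ _
  have hn₁ : e1 n' ≠ m := by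
    intro hc
    exact h' (e1.injective (by rw [hc, h1]))
  refine ⟨Equiv.swap (e1 n') n * e1, ?_, ?_⟩
  · rw [Equiv.Perm.mul_apply, h1, Equiv.swap_apply_of_ne_of_ne (Ne.symm hn₁) h]
  · rw [Equiv.Perm.mul_apply, Equiv.swap_apply_left]

private lemma exp_sum_zero (d : ℕ) (hd : 2 ≤ d) :
    ∑ a : Fin d, Complex.exp (2 * π * Complex.I * ((a : ℕ) : ℝ) / d) = 0 := by
  have hprim := Complex.isPrimitiveRoot_exp d (by omega)
  have h := hprim.geom_sum_eq_zero (by omega : 1 < d)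
  rw [← h, ← Fin.sum_univ_eq_sum_range (fun i => Complex.exp (2 * ↑π * Complex.I / ↑d) ^ i) d]
  refine Finset.sum_congr rfl fun a _ => ?_
  rw [← Complex.exp_nat_mul]
  congr 1
  push_cast
  ring

private lemma exp_unit (d : ℕ) (a : ℕ) :
    Complex.exp (2 * π * Complex.I * ((a : ℕ) : ℝ) / d) *
      (starRingEnd ℂ) (Complex.exp (2 * π * Complex.I * ((a : ℕ) : ℝ) / d)) = 1 := by
  have h : (2 * (π:ℂ) * Complex.I * ((a:ℕ) : ℝ) / d) = ((2 * π * a / d : ℝ) : ℂ) * Complex.I := by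
    push_cast; ring
  rw [h, Complex.mul_conj, Complex.normSq_eq_norm_sq, Complex.norm_exp_ofReal_mul_I]
  norm_num

/-- The stellar mirror entanglement is bounded above by the linear entropy:
`min_σ (1 − |∑_j ω^j p_{σ(j)}|²) ≤ (d/(d−1))(1 − ∑_j p_j²)`. -/
theorem stellar_le_linear_entropy (d : ℕ) (hd : 2 ≤ d)
    (p : Fin d → ℝ) (hp : ∀ j, 0 ≤ p j) (hsum : ∑ j, p j = 1) :
    ∃ σ : Equiv.Perm (Fin d),
      1 - (‖∑ j : Fin d,
          Complex.exp (2 * π * Complex.I * (j.val : ℝ) / d) * (p (σ j) : ℂ)‖) ^ 2 ≤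
        ((d : ℝ) / (d - 1)) * (1 - ∑ j, (p j) ^ 2) := by
  classical
  have hd2 : (2:ℝ) ≤ (d:ℝ) := by exact_mod_cast hd
  have hdm1 : (0:ℝ) < (d:ℝ) - 1 := by linarith
  have hdC1 : ((d:ℂ) - 1) ≠ 0 := by
    have : ((d:ℝ) - 1 : ℝ) ≠ 0 := hdm1.ne'
    exact_mod_cast this
  set q : Fin d → ℂ := fun m => ((p m : ℝ) : ℂ) with hq
  set f : Fin d → ℂ := fun a => Complex.exp (2 * π * Complex.I * ((a : Fin d).val : ℝ) / d) with hf
  set S : Equiv.Perm (Fin d) → ℂ := fun σ => ∑ j : Fin d, f j * q (σ j) with hS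
  set N : ℕ := Fintype.card (Equiv.Perm (Fin d)) with hN
  set T : Equiv.Perm (Fin d) → ℂ := fun σ => ∑ m : Fin d, f (σ m) * q m with hT
  set c : Fin d → Fin d → ℂ :=
    fun m n => ∑ σ : Equiv.Perm (Fin d), f (σ m) * (starRingEnd ℂ) (f (σ n)) with hc
  have hfsum : ∑ a, f a = 0 := exp_sum_zero d hd
  have hfu : ∀ a, f a * (starRingEnd ℂ) (f a) = 1 := fun a => exp_unit d a.val
  have hσ0 : ∀ σ : Equiv.Perm (Fin d), ∑ m, f (σ m) = 0 := by
    intro σ; rw [Equiv.sum_comp σ f]; exact hfsum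
  -- diagonal of c
  have hcdiag : ∀ m, c m m = (N : ℂ) := by
    intro m
    simp only [hc]
    rw [Finset.sum_congr rfl fun σ _ => hfu (σ m)]
    simp [hN]
  -- total sum of c is zero
  have hctot : ∑ m, ∑ n, c m n = 0 := by
    simp only [hc]
    rw [Finset.sum_congr rfl fun m _ => Finset.sum_comm]
    rw [Finset.sum_comm]
    refine Finset.sum_eq_zero fun σ _ => ?_
    rw [← Finset.sum_mul_sum, hσ0 σ, zero_mul]
  -- off-diagonal entries of c are all equal
  set i0 : Fin d := ⟨0, by omega⟩ with hi0
  set i1 : Fin d := ⟨1, by omega⟩ with hi1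
  have hi01 : i0 ≠ i1 := by
    simp only [hi0, hi1, Ne, Fin.ext_iff]
    norm_num
  have hcoff : ∀ m n, m ≠ n → c m n = c i0 i1 := by
    intro m n hmn
    obtain ⟨g, hg0, hg1⟩ := swap_pair_exists hmn hi01
    have hcomp := Equiv.sum_comp (Equiv.mulRight g)
      (fun σ => f (σ i0) * (starRingEnd ℂ) (f (σ i1)))
    simp only [hc]
    rw [← hcomp]
    refine Finset.sum_congr rfl fun τ _ => ?_
    simp [Equiv.Perm.mul_apply, hg0, hg1]
  -- sum of off-diagonal entries
  have hoffsum : ∑ m, ∑ n ∈ univ.erase m, c m n = -((d:ℂ) * N) := by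
    have h1 : ∀ m : Fin d, ∑ n ∈ univ.erase m, c m n = (∑ n, c m n) - c m m :=
      fun m => Finset.sum_erase_eq_sub (mem_univ m)
    rw [Finset.sum_congr rfl fun m _ => h1 m, Finset.sum_sub_distrib, hctot,
      Finset.sum_congr rfl fun m _ => hcdiag m]
    simp [Fintype.card_fin, mul_comm]
  have hcount : ∑ m : Fin d, ∑ n ∈ univ.erase m, c m n = ((d * (d-1) : ℕ) : ℂ) * c i0 i1 := by
    rw [Finset.sum_congr rfl fun m _ =>
      Finset.sum_congr rfl fun n hn => hcoff m n (Ne.symm (Finset.ne_of_mem_erase hn))]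
    simp [Finset.sum_const, Finset.card_erase_of_mem, Fintype.card_fin, mul_assoc]
  have hc01 : c i0 i1 = -((N:ℂ) / ((d:ℂ) - 1)) := by
    have hdd : ((d * (d-1) : ℕ) : ℂ) = (d:ℂ) * ((d:ℂ) - 1) := by
      have h1 : ((d - 1 : ℕ) : ℂ) = (d:ℂ) - 1 := by
        rw [Nat.cast_sub (by omega)]; norm_num
      push_cast [Nat.cast_sub (by omega : 1 ≤ d)]
      ring
    have := hcount.symm.trans hoffsum
    rw [hdd] at this
    have hdC : (d:ℂ) ≠ 0 := by
      exact_mod_cast (by positivity : ((d:ℝ)) ≠ 0)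
    have this2 : ((d:ℂ) - 1) * c i0 i1 = -(N:ℂ) := by
      apply mul_left_cancel₀ hdC
      linear_combination this
    field_simp
    linear_combination this2
  -- relate S and T
  have hST : ∀ σ : Equiv.Perm (Fin d), S σ⁻¹ = T σ := by
    intro σ
    simp only [hS, hT]
    rw [← Equiv.sum_comp σ (fun j => f j * q (σ⁻¹ j))]
    exact Finset.sum_congr rfl fun m _ => by rw [Equiv.Perm.inv_def, Equiv.symm_apply_apply]
  have hsum1 : ∑ σ : Equiv.Perm (Fin d), S σ * (starRingEnd ℂ) (S σ)
      = ∑ σ : Equiv.Perm (Fin d), T σ * (starRingEnd ℂ) (T σ) := by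
    rw [← Equiv.sum_comp (Equiv.inv (Equiv.Perm (Fin d)))
      (fun σ => S σ * (starRingEnd ℂ) (S σ))]
    exact Finset.sum_congr rfl fun σ _ => by rw [Equiv.inv_apply, hST σ]
  have hTexp : ∀ σ : Equiv.Perm (Fin d), T σ * (starRingEnd ℂ) (T σ)
      = ∑ m, ∑ n, (q m * q n) * (f (σ m) * (starRingEnd ℂ) (f (σ n))) := by
    intro σ
    simp only [hT, map_sum]
    rw [Finset.sum_mul_sum]
    refine Finset.sum_congr rfl fun m _ => Finset.sum_congr rfl fun n _ => ?_
    rw [map_mul]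
    simp only [hq, Complex.conj_ofReal]
    ring
  have hsum2 : ∑ σ : Equiv.Perm (Fin d), T σ * (starRingEnd ℂ) (T σ)
      = ∑ m, ∑ n, (q m * q n) * c m n := by
    rw [Finset.sum_congr rfl fun σ _ => hTexp σ]
    rw [Finset.sum_comm]
    refine Finset.sum_congr rfl fun m _ => ?_
    rw [Finset.sum_comm]
    refine Finset.sum_congr rfl fun n _ => ?_
    simp only [hc]
    rw [← Finset.mul_sum]
  have hqsum : ∑ m, q m = 1 := by
    simp only [hq]
    rw [← Complex.ofReal_sum, hsum, Complex.ofReal_one]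
  have hqoff : ∑ m, ∑ n ∈ univ.erase m, (q m * q n) = 1 - ∑ m, (q m)^2 := by
    have h1 : ∀ m : Fin d, ∑ n ∈ univ.erase m, (q m * q n) = q m * 1 - (q m)^2 := by
      intro m
      rw [Finset.sum_erase_eq_sub (mem_univ m), ← Finset.mul_sum, hqsum]
      ring
    rw [Finset.sum_congr rfl fun m _ => h1 m, Finset.sum_sub_distrib]
    simp [hqsum]
  have hsplit : ∑ m, ∑ n, (q m * q n) * c m n
      = (∑ m, (q m)^2) * N + (1 - ∑ m, (q m)^2) * c i0 i1 := by
    have h1 : ∀ m : Fin d, ∑ n, (q m * q n) * c m n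
        = (q m)^2 * N + (∑ n ∈ univ.erase m, q m * q n) * c i0 i1 := by
      intro m
      rw [← Finset.add_sum_erase _ _ (mem_univ m), hcdiag m]
      congr 1
      · ring
      · rw [Finset.sum_mul]
        exact Finset.sum_congr rfl fun n hn => by
          rw [hcoff m n (Ne.symm (Finset.ne_of_mem_erase hn))]
    rw [Finset.sum_congr rfl fun m _ => h1 m, Finset.sum_add_distrib, ← Finset.sum_mul,
      ← Finset.sum_mul, hqoff]
  set s : ℝ := ∑ j, p j ^ 2 with hs
  have hqs : ∑ m, (q m)^2 = ((s : ℝ) : ℂ) := by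
    simp only [hq, hs]
    push_cast
    rfl
  have habs : ∀ σ : Equiv.Perm (Fin d),
      ((‖S σ‖ ^ 2 : ℝ) : ℂ) = S σ * (starRingEnd ℂ) (S σ) := fun σ => by
    rw [← Complex.normSq_eq_norm_sq, ← Complex.mul_conj]
  have hreal : ∑ σ : Equiv.Perm (Fin d), (‖S σ‖)^2
      = s * N - (1 - s) * N / ((d:ℝ) - 1) := by
    have h1 : ((∑ σ : Equiv.Perm (Fin d), (‖S σ‖)^2 : ℝ) : ℂ)
        = ((s * N - (1 - s) * N / ((d:ℝ) - 1) : ℝ) : ℂ) := by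
      calc ((∑ σ : Equiv.Perm (Fin d), (‖S σ‖)^2 : ℝ) : ℂ)
          = ∑ σ : Equiv.Perm (Fin d), (((‖S σ‖)^2 : ℝ) : ℂ) := by push_cast; rfl
        _ = ∑ σ : Equiv.Perm (Fin d), S σ * (starRingEnd ℂ) (S σ) :=
            Finset.sum_congr rfl fun σ _ => habs σ
        _ = (∑ m, (q m)^2) * N + (1 - ∑ m, (q m)^2) * c i0 i1 := by
            rw [hsum1, hsum2, hsplit]
        _ = ((s * N - (1 - s) * N / ((d:ℝ) - 1) : ℝ) : ℂ) := by
            rw [hqs, hc01]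
            push_cast
            field_simp
            ring
    exact_mod_cast h1
  have key : ∑ σ : Equiv.Perm (Fin d), (1 - (‖S σ‖)^2)
      ≤ ∑ σ : Equiv.Perm (Fin d), ((d:ℝ)/((d:ℝ)-1) * (1 - s)) := by
    rw [Finset.sum_sub_distrib, hreal, Finset.sum_const, Finset.sum_const]
    simp only [card_univ, nsmul_eq_mul, mul_one, ← hN]
    have heq : (N:ℝ) - (s * N - (1-s) * N/((d:ℝ)-1)) = (N:ℝ) * ((d:ℝ)/((d:ℝ)-1) * (1-s)) := by
      field_simp
      ring
    linarith [heq]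
  obtain ⟨σ, -, hσ⟩ := Finset.exists_le_of_sum_le Finset.univ_nonempty key
  refine ⟨σ, ?_⟩
  simp only [hS, hq, hf] at hσ
  exact hσ
end

section
/- The stellar mirror entanglement is bounded below by a rescaled linear entropy: for every probability vector p of length d (d ≥ 2), min over permutations σ of (1 − |∑_j ω^j p_{σ(j)}|^2) ≥ 2 sin²(π/d) (1 − ∑_j p_j^2), where ω = e^{2πi/d}. -/
open Complex Real

private lemma one_sub_cos_eq (y : ℝ) : 1 - Real.cos y = 2 * Real.sin (y / 2) ^ 2 := by
  have h := Real.cos_sq (y / 2)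
  rw [show 2 * (y / 2) = y by ring] at h
  have h2 := Real.sin_sq_add_cos_sq (y / 2)
  linarith

private lemma sin_le_aux (d : ℕ) (hd : 2 ≤ d) (m : ℕ) (h1 : 1 ≤ m) (h2 : m < d) :
    Real.sin (π / d) ≤ Real.sin (π * m / d) := by
  have hd0 : (0:ℝ) < d := by positivity
  have hπ := Real.pi_pos
  have key : ∀ n : ℕ, 1 ≤ n → 2 * n ≤ d → Real.sin (π / d) ≤ Real.sin (π * n / d) := by
    intro n hn1 hn2
    have hmem1 : π / d ∈ Set.Icc (-(π/2)) (π/2) := by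
      constructor
      · have : 0 ≤ π / d := by positivity
        linarith
      · rw [div_le_div_iff₀ hd0 (by norm_num)]
        have : (2:ℝ) ≤ d := by exact_mod_cast hd
        nlinarith
    have hmem2 : π * n / d ∈ Set.Icc (-(π/2)) (π/2) := by
      constructor
      · have : 0 ≤ π * n / d := by positivity
        linarith
      · rw [div_le_div_iff₀ hd0 (by norm_num)]
        have h2n : (2:ℝ) * n ≤ d := by exact_mod_cast hn2
        nlinarith
    have hle : π / d ≤ π * n / d := by
      have h1n : (1:ℝ) ≤ n := by exact_mod_cast hn1
      gcongr
      nlinarith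
    exact Real.strictMonoOn_sin.monotoneOn hmem1 hmem2 hle
  by_cases h : 2 * m ≤ d
  · exact key m h1 h
  · have hm_le : m ≤ d := le_of_lt h2
    have heq : Real.sin (π * m / d) = Real.sin (π * (d - m : ℕ) / d) := by
      rw [← Real.sin_pi_sub]
      congr 1
      have : ((d - m : ℕ) : ℝ) = (d : ℝ) - m := by
        push_cast [Nat.cast_sub hm_le]; ring
      rw [this]
      field_simp
    rw [heq]
    apply key
    · omega
    · omega

/-- The stellar mirror entanglement is bounded below by a rescaled linear entropy:
for every permutation `σ`, `1 − |∑_j ω^j p_{σ(j)}|² ≥ 2 sin²(π/d) (1 − ∑_j p_j²)`. -/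
theorem stellar_ge_rescaled_linear_entropy (d : ℕ) (hd : 2 ≤ d)
    (p : Fin d → ℝ) (hp : ∀ j, 0 ≤ p j) (hsum : ∑ j, p j = 1) :
    ∀ σ : Equiv.Perm (Fin d),
      2 * Real.sin (π / d) ^ 2 * (1 - ∑ j, (p j) ^ 2) ≤
        1 - (‖∑ j : Fin d,
          Complex.exp (2 * π * Complex.I * (j.val : ℝ) / d) * (p (σ j) : ℂ)‖) ^ 2 := by
  intro σ
  have hd0 : (0:ℝ) < d := by positivity
  set q : Fin d → ℝ := fun j => p (σ j) with hq
  have hq0 : ∀ j, 0 ≤ q j := fun j => hp _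
  have hqsum : ∑ j, q j = 1 := by
    rw [← hsum]; exact Equiv.sum_comp σ p
  have hqsq : ∑ j, q j ^ 2 = ∑ j, p j ^ 2 := Equiv.sum_comp σ (fun j => p j ^ 2)
  set θ : Fin d → ℝ := fun j => 2 * π * j / d with hθ
  -- rewrite the exponential
  have hz : ∀ j : Fin d, Complex.exp (2 * π * Complex.I * (j.val : ℝ) / d)
      = Complex.exp ((θ j : ℝ) * Complex.I) := by
    intro j
    congr 1
    simp only [hθ]
    push_cast
    ring
  set z : ℂ := ∑ j : Fin d, Complex.exp (2 * π * Complex.I * (j.val : ℝ) / d) * (p (σ j) : ℂ)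
    with hzdef
  set A : ℝ := ∑ j, Real.cos (θ j) * q j with hA
  set B : ℝ := ∑ j, Real.sin (θ j) * q j with hB
  have hre : z.re = A := by
    rw [hzdef, Complex.re_sum]
    apply Finset.sum_congr rfl
    intro j _
    rw [hz j]
    simp [Complex.mul_re, Complex.exp_ofReal_mul_I_re, Complex.exp_ofReal_mul_I_im]
    exact Or.inl rfl
  have him : z.im = B := by
    rw [hzdef, Complex.im_sum]
    apply Finset.sum_congr rfl
    intro j _
    rw [hz j]
    simp [Complex.mul_im, Complex.exp_ofReal_mul_I_re, Complex.exp_ofReal_mul_I_im]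
    exact Or.inl rfl
  have habs : ‖z‖ ^ 2 = A ^ 2 + B ^ 2 := by
    rw [Complex.sq_norm, Complex.normSq_apply, hre, him]
    ring
  rw [habs]
  -- expand everything into double sums
  have e1 : (1 : ℝ) = ∑ j, ∑ k, q j * q k := by
    rw [← Finset.sum_mul_sum, hqsum]; norm_num
  have eA : A ^ 2 = ∑ j, ∑ k, (Real.cos (θ j) * q j) * (Real.cos (θ k) * q k) := by
    rw [sq, hA, Finset.sum_mul_sum]
  have eB : B ^ 2 = ∑ j, ∑ k, (Real.sin (θ j) * q j) * (Real.sin (θ k) * q k) := by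
    rw [sq, hB, Finset.sum_mul_sum]
  have expand : 1 - (A ^ 2 + B ^ 2)
      = ∑ j, ∑ k, (1 - Real.cos (θ j - θ k)) * (q j * q k) := by
    rw [eA, eB]
    nth_rewrite 1 [e1]
    rw [← Finset.sum_add_distrib, ← Finset.sum_sub_distrib]
    apply Finset.sum_congr rfl
    intro j _
    rw [← Finset.sum_add_distrib, ← Finset.sum_sub_distrib]
    apply Finset.sum_congr rfl
    intro k _
    rw [Real.cos_sub]
    ring
  have expand2 : 2 * Real.sin (π / d) ^ 2 * (1 - ∑ j, p j ^ 2)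
      = ∑ j, ∑ k, (if j = k then 0 else 2 * Real.sin (π / d) ^ 2) * (q j * q k) := by
    rw [← hqsq]
    have step : ∀ j : Fin d,
        ∑ k, (if j = k then 0 else 2 * Real.sin (π / ↑d) ^ 2) * (q j * q k)
        = (∑ k, 2 * Real.sin (π / ↑d) ^ 2 * (q j * q k))
            - 2 * Real.sin (π / ↑d) ^ 2 * (q j * q j) := by
      intro j
      have hk : ∀ k : Fin d, (if j = k then 0 else 2 * Real.sin (π / ↑d) ^ 2) * (q j * q k)
          = 2 * Real.sin (π / ↑d) ^ 2 * (q j * q k)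
            - (if j = k then 2 * Real.sin (π / ↑d) ^ 2 * (q j * q k) else 0) := by
        intro k; by_cases h : j = k <;> simp [h]
      simp only [hk]
      rw [Finset.sum_sub_distrib, Finset.sum_ite_eq, if_pos (Finset.mem_univ j)]
    rw [Finset.sum_congr rfl fun j _ => step j, Finset.sum_sub_distrib]
    have t1 : ∑ j, ∑ k, 2 * Real.sin (π / ↑d) ^ 2 * (q j * q k)
        = 2 * Real.sin (π / ↑d) ^ 2 := by
      simp_rw [← Finset.mul_sum]
      rw [← Finset.sum_mul, hqsum]
      norm_num
    have t2 : ∑ j, 2 * Real.sin (π / ↑d) ^ 2 * (q j * q j)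
        = 2 * Real.sin (π / ↑d) ^ 2 * ∑ j, q j ^ 2 := by
      rw [Finset.mul_sum]
      exact Finset.sum_congr rfl fun j _ => by ring
    rw [t1, t2]; ring
  rw [expand, expand2]
  apply Finset.sum_le_sum
  intro j _
  apply Finset.sum_le_sum
  intro k _
  have hqq : 0 ≤ q j * q k := mul_nonneg (hq0 j) (hq0 k)
  by_cases h : j = k
  · simp [h]
  · simp only [h, if_false]
    apply mul_le_mul_of_nonneg_right _ hqq
    have hcos : 1 - Real.cos (θ j - θ k) = 2 * Real.sin ((θ j - θ k) / 2) ^ 2 :=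
      one_sub_cos_eq _
    rw [hcos]
    have harg : (θ j - θ k) / 2 = π * ((j : ℝ) - (k : ℝ)) / d := by
      simp only [hθ]; field_simp
    rw [harg]
    have hsq : Real.sin (π / d) ^ 2 ≤ Real.sin (π * ((j : ℝ) - (k : ℝ)) / d) ^ 2 := by
      have hnn : 0 ≤ Real.sin (π / d) := by
        apply Real.sin_nonneg_of_nonneg_of_le_pi
        · positivity
        · rw [div_le_iff₀ hd0]
          nlinarith [Real.pi_pos, show (2:ℝ) ≤ d from by exact_mod_cast hd]
      rcases lt_or_gt_of_ne (fun hc : (j:Fin d) = k => h hc) with hlt | hgt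
      · -- j < k : use m = k - j and evenness of sin²
        have hm1 : 1 ≤ k.val - j.val := by omega
        have hm2 : k.val - j.val < d := by omega
        have := sin_le_aux d hd (k.val - j.val) hm1 hm2
        have heq : Real.sin (π * ((j : ℝ) - (k : ℝ)) / d)
            = - Real.sin (π * ((k.val - j.val : ℕ) : ℝ) / d) := by
          rw [← Real.sin_neg]
          congr 1
          have : ((k.val - j.val : ℕ) : ℝ) = (k.val : ℝ) - j.val := by
            push_cast [Nat.cast_sub (le_of_lt (show j.val < k.val from hlt))]; ring
          rw [this]; ring
        rw [heq, neg_pow]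
        simp only [neg_neg, pow_two]
        have : Real.sin (π / d) * Real.sin (π / d)
            ≤ Real.sin (π * ((k.val - j.val : ℕ) : ℝ) / d)
              * Real.sin (π * ((k.val - j.val : ℕ) : ℝ) / d) :=
          mul_le_mul this this hnn (le_trans hnn this)
        simpa using this
      · have hm1 : 1 ≤ j.val - k.val := by omega
        have hm2 : j.val - k.val < d := by omega
        have hle := sin_le_aux d hd (j.val - k.val) hm1 hm2
        have heq : Real.sin (π * ((j : ℝ) - (k : ℝ)) / d)
            = Real.sin (π * ((j.val - k.val : ℕ) : ℝ) / d) := by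
          congr 1
          have : ((j.val - k.val : ℕ) : ℝ) = (j.val : ℝ) - k.val := by
            push_cast [Nat.cast_sub (le_of_lt (show k.val < j.val from hgt))]; ring
          rw [this]
        rw [heq]
        exact pow_le_pow_left₀ hnn hle 2
    linarith
end

section
/- For d ≥ 2 and the vector λ ∈ ℂ^d with λ_j = exp(2πij/d), the sum over all permutation matrices σ of σᵀ (Re λλ†) σ equals d!·(d/(d−1)) times the orthogonal projection onto the hyperplane orthogonal to the all-ones vector: ∑_{σ ∈ S_d} σᵀ Re(λλ†) σ = d!·(d/(d−1))·(I − (1/d) J), where J is the all-ones matrix. -/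
open Matrix Complex Real

/-- Schur-lemma identity: `∑_{σ ∈ S_d} σᵀ Re(λλ†) σ = d!·(d/(d−1))·(I − (1/d)J)` for the
stellar spectrum `λ_j = e^{2πij/d}`, where `J` is the all-ones matrix. -/
theorem sum_perm_conj_stellar_projector (d : ℕ) (hd : 2 ≤ d)
    (lam : Fin d → ℂ)
    (hlam : ∀ j : Fin d, lam j = Complex.exp (2 * π * Complex.I * ((j.val : ℝ) + 1) / d))
    (M : Matrix (Fin d) (Fin d) ℝ)
    (hM : ∀ i j, M i j = (lam i * (starRingEnd ℂ) (lam j)).re) :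
    ∑ σ : Equiv.Perm (Fin d), (σ.permMatrix ℝ)ᵀ * M * σ.permMatrix ℝ =
      ((d.factorial : ℝ) * ((d : ℝ) / (d - 1))) •
        ((1 : Matrix (Fin d) (Fin d) ℝ) - ((1 : ℝ) / d) • Matrix.of fun _ _ => (1 : ℝ)) := by
  have hd1 : 1 < d := hd
  have hdne : d ≠ 0 := by omega
  have hdR : (d : ℝ) ≠ 0 := Nat.cast_ne_zero.mpr hdne
  have hdR1 : (d : ℝ) - 1 ≠ 0 := by
    have : (2 : ℝ) ≤ (d : ℝ) := by exact_mod_cast hd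
    linarith
  -- λ_j = ζ^(j+1) for the primitive root ζ
  set ζ : ℂ := Complex.exp (2 * π * Complex.I / d) with hζ
  have hprim : IsPrimitiveRoot ζ d := Complex.isPrimitiveRoot_exp d hdne
  have hlam' : ∀ j : Fin d, lam j = ζ ^ (j.val + 1) := by
    intro j
    rw [hlam, hζ, ← Complex.exp_nat_mul]
    congr 1
    push_cast
    ring
  -- sum of the λ's is zero
  have hsum : ∑ j : Fin d, lam j = 0 := by
    have h0 : ∑ i ∈ Finset.range d, ζ ^ i = 0 := hprim.geom_sum_eq_zero hd1
    calc ∑ j : Fin d, lam j = ∑ j : Fin d, ζ * ζ ^ (j.val) := by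
          refine Finset.sum_congr rfl fun j _ => ?_
          rw [hlam', pow_succ, mul_comm]
      _ = ζ * ∑ i ∈ Finset.range d, ζ ^ i := by
          rw [← Finset.mul_sum, Fin.sum_univ_eq_sum_range (fun i => ζ ^ i)]
      _ = 0 := by rw [h0, mul_zero]
  -- diagonal entries of M are 1
  have hMdiag : ∀ k, M k k = 1 := by
    intro k
    rw [hM, Complex.mul_conj]
    have hk : lam k = Complex.exp (((2 * π * ((k.val : ℝ) + 1) / d : ℝ) : ℂ) * Complex.I) := by
      rw [hlam]; congr 1; push_cast; ring
    rw [hk]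
    have := Complex.norm_exp_ofReal_mul_I (2 * π * ((k.val : ℝ) + 1) / d)
    rw [Complex.normSq_eq_norm_sq, this]
    norm_num
  -- total sum of entries of M is 0
  have hMsum : ∑ k : Fin d, ∑ l : Fin d, M k l = 0 := by
    have : ∑ k : Fin d, ∑ l : Fin d, M k l
        = ((∑ k : Fin d, lam k) * (starRingEnd ℂ) (∑ l : Fin d, lam l)).re := by
      rw [map_sum, Finset.sum_mul_sum, Complex.re_sum]
      refine Finset.sum_congr rfl fun k _ => ?_
      rw [Complex.re_sum]
      exact Finset.sum_congr rfl fun l _ => hM k l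
    rw [this, hsum, zero_mul, Complex.zero_re]
  -- the averaged matrix
  set F : Matrix (Fin d) (Fin d) ℝ :=
    Matrix.of (fun i j => ∑ σ : Equiv.Perm (Fin d), M (σ i) (σ j)) with hF
  have hLHS : ∑ σ : Equiv.Perm (Fin d), (σ.permMatrix ℝ)ᵀ * M * σ.permMatrix ℝ = F := by
    have hterm : ∀ σ : Equiv.Perm (Fin d),
        (σ.permMatrix ℝ)ᵀ * M * σ.permMatrix ℝ = M.submatrix ⇑σ⁻¹ ⇑σ⁻¹ := by
      intro σ
      have h1 : (σ.permMatrix ℝ)ᵀ = ((σ⁻¹ : Equiv.Perm (Fin d)).permMatrix ℝ) := by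
        rw [Equiv.Perm.permMatrix, Equiv.Perm.permMatrix, ← PEquiv.toMatrix_symm,
          ← Equiv.toPEquiv_symm]
        rfl
      rw [h1, Equiv.Perm.permMatrix, Equiv.Perm.permMatrix,
        PEquiv.toMatrix_toPEquiv_mul, PEquiv.mul_toMatrix_toPEquiv, Matrix.submatrix_submatrix]
      rfl
    ext i j
    rw [Matrix.sum_apply]
    simp only [hterm, Matrix.submatrix_apply]
    rw [hF]
    simp only [Matrix.of_apply]
    exact Fintype.sum_equiv (Equiv.inv (Equiv.Perm (Fin d))) _ _ (fun σ => rfl)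
  -- invariance of F under permutations
  have hinv : ∀ (τ : Equiv.Perm (Fin d)) (i j : Fin d), F (τ i) (τ j) = F i j := by
    intro τ i j
    rw [hF]
    simp only [Matrix.of_apply]
    exact Fintype.sum_equiv (Equiv.mulRight τ) _ _ (fun σ => rfl)
  let i0 : Fin d := ⟨0, by omega⟩
  let i1 : Fin d := ⟨1, by omega⟩
  have hne01 : i0 ≠ i1 := by simp [i0, i1, Fin.ext_iff]
  have hdiagconst : ∀ i, F i i = F i0 i0 := by
    intro i
    have h := hinv (Equiv.swap i0 i) i0 i0
    rwa [Equiv.swap_apply_left] at h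
  have hdiagsum : ∑ i, F i i = (d.factorial : ℝ) * d := by
    have h1 : ∀ σ : Equiv.Perm (Fin d), ∑ i, M (σ i) (σ i) = (d : ℝ) := by
      intro σ
      rw [Fintype.sum_equiv σ (fun i => M (σ i) (σ i)) (fun k => M k k) (fun i => rfl)]
      simp [hMdiag]
    calc ∑ i, F i i = ∑ i, ∑ σ : Equiv.Perm (Fin d), M (σ i) (σ i) := rfl
      _ = ∑ σ : Equiv.Perm (Fin d), ∑ i, M (σ i) (σ i) := Finset.sum_comm
      _ = ∑ _σ : Equiv.Perm (Fin d), (d : ℝ) := Finset.sum_congr rfl fun σ _ => h1 σ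
      _ = (d.factorial : ℝ) * d := by
          simp [Finset.sum_const, Finset.card_univ, Fintype.card_perm, Fintype.card_fin,
            mul_comm]
  have hFdiag : ∀ i, F i i = (d.factorial : ℝ) := by
    have h2 : (d : ℝ) * F i0 i0 = (d.factorial : ℝ) * d := by
      rw [← hdiagsum]
      rw [Finset.sum_congr rfl fun i _ => hdiagconst i]
      simp [Finset.sum_const, Finset.card_univ, mul_comm]
    intro i
    rw [hdiagconst i]
    have := mul_left_cancel₀ hdR (h2.trans (by ring))
    exact this
  set E : ℝ := F i0 i1 with hEdef
  have hoff : ∀ i j, i ≠ j → F i j = E := by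
    intro i j hij
    set j' : Fin d := Equiv.swap i0 i i1 with hj'
    have hj'i : j' ≠ i := by
      intro h
      apply hne01
      have h2 : Equiv.swap i0 i j' = Equiv.swap i0 i i := congrArg _ h
      rw [hj', Equiv.swap_apply_self, Equiv.swap_apply_right] at h2
      exact h2.symm
    set τ : Equiv.Perm (Fin d) := Equiv.swap j' j * Equiv.swap i0 i with hτ
    have hτ0 : τ i0 = i := by
      rw [hτ, Equiv.Perm.mul_apply, Equiv.swap_apply_left,
        Equiv.swap_apply_of_ne_of_ne (Ne.symm hj'i) hij]
    have hτ1 : τ i1 = j := by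
      rw [hτ, Equiv.Perm.mul_apply, ← hj', Equiv.swap_apply_left]
    have h := hinv τ i0 i1
    rw [hτ0, hτ1] at h
    exact h
  have htot : ∑ i, ∑ j, F i j = 0 := by
    have h1 : ∀ σ : Equiv.Perm (Fin d), ∑ i, ∑ j, M (σ i) (σ j) = 0 := by
      intro σ
      calc ∑ i, ∑ j, M (σ i) (σ j)
          = ∑ k, ∑ j, M k (σ j) :=
            Fintype.sum_equiv σ _ _ (fun i => rfl)
        _ = ∑ k, ∑ l, M k l :=
            Finset.sum_congr rfl fun k _ => Fintype.sum_equiv σ _ _ (fun j => rfl)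
        _ = 0 := hMsum
    calc ∑ i, ∑ j, F i j
        = ∑ i, ∑ σ : Equiv.Perm (Fin d), ∑ j, M (σ i) (σ j) :=
          Finset.sum_congr rfl fun i _ => Finset.sum_comm
      _ = ∑ σ : Equiv.Perm (Fin d), ∑ i, ∑ j, M (σ i) (σ j) := Finset.sum_comm
      _ = 0 := by simp [h1]
  have hEeq : E = -(d.factorial : ℝ) / ((d : ℝ) - 1) := by
    have hrow : ∀ i : Fin d, ∑ j, F i j = (d.factorial : ℝ) + ((d : ℝ) - 1) * E := by
      intro i
      have hsplit : ∀ j, F i j = (if j = i then ((d.factorial : ℝ) - E) else 0) + E := by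
        intro j
        by_cases h : j = i
        · subst h; simp [hFdiag]
        · simp [h, hoff i j (fun hh => h hh.symm)]
      rw [Finset.sum_congr rfl fun j _ => hsplit j, Finset.sum_add_distrib]
      simp [Finset.sum_const, Finset.card_univ]
      ring
    have h0 : (0 : ℝ) = (d : ℝ) * ((d.factorial : ℝ) + ((d : ℝ) - 1) * E) := by
      calc (0 : ℝ) = ∑ i, ∑ j, F i j := htot.symm
        _ = ∑ _i : Fin d, ((d.factorial : ℝ) + ((d : ℝ) - 1) * E) :=
            Finset.sum_congr rfl fun i _ => hrow i
        _ = (d : ℝ) * ((d.factorial : ℝ) + ((d : ℝ) - 1) * E) := by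
            simp [Finset.sum_const, Finset.card_univ]
            ring
    have h1 : (d.factorial : ℝ) + ((d : ℝ) - 1) * E = 0 := by
      rcases mul_eq_zero.mp h0.symm with h | h
      · exact absurd h hdR
      · exact h
    field_simp
    linarith
  rw [hLHS]
  ext i j
  simp only [Matrix.smul_apply, Matrix.sub_apply, Matrix.one_apply, Matrix.of_apply,
    smul_eq_mul]
  by_cases h : i = j
  · subst h
    rw [show F i i = (d.factorial : ℝ) from hFdiag i]
    simp only [if_pos rfl]
    field_simp
    simp
  · rw [hoff i j h, hEeq]
    simp only [if_neg h]
    field_simp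
    ring
end

section
/- Let p be a probability vector of length d with at most 2 nonzero entries, say values t and 1−t. Then for the stellar spectrum ω^j = e^{2πij/d}, min over permutations σ of (1 − |∑_j ω^j p_{σ(j)}|^2) = 4 sin²(π/d) t(1−t). -/
open Complex Real

lemma abs_sq_combo (t α β : ℝ) :
    ‖Complex.exp (↑α * Complex.I) * (t:ℂ) + Complex.exp (↑β * Complex.I) * ((1-t:ℝ):ℂ)‖ ^ 2
    = t^2 + (1-t)^2 + 2*t*(1-t)*Real.cos (α - β) := by
  rw [Complex.sq_norm, Complex.normSq_add, Complex.normSq_mul, Complex.normSq_mul]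
  have h1 : ∀ x : ℝ, Complex.normSq (Complex.exp (↑x * Complex.I)) = 1 := by
    intro x
    rw [← Complex.sq_norm, Complex.norm_exp_ofReal_mul_I]; norm_num
  have h2 : (Complex.exp (↑α * Complex.I) * (t:ℂ) *
      (starRingEnd ℂ) (Complex.exp (↑β * Complex.I) * ((1-t:ℝ):ℂ))).re
      = t * (1-t) * Real.cos (α - β) := by
    rw [map_mul, ← Complex.exp_conj]
    have : (starRingEnd ℂ) (↑β * Complex.I) = -(↑β) * Complex.I := by
      simp [Complex.conj_ofReal]
    rw [this, Complex.conj_ofReal]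
    have e1 : Complex.exp (↑α * Complex.I) * Complex.exp (-↑β * Complex.I)
        = Complex.exp (↑(α - β) * Complex.I) := by
      rw [← Complex.exp_add]; congr 1; push_cast; ring
    have e2 : Complex.exp (↑α * Complex.I) * ↑t * (Complex.exp (-↑β * Complex.I) * ↑(1-t))
        = ((t * (1-t) : ℝ) : ℂ) * Complex.exp (↑(α - β) * Complex.I) := by
      rw [← e1]; push_cast; ring
    rw [e2, Complex.re_ofReal_mul, Complex.exp_ofReal_mul_I_re]
  rw [h1, h1, h2, Complex.normSq_ofReal, Complex.normSq_ofReal]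
  ring

lemma value_eq (t α β : ℝ) :
    1 - ‖Complex.exp (↑α * Complex.I) * (t:ℂ) + Complex.exp (↑β * Complex.I) * ((1-t:ℝ):ℂ)‖ ^ 2
    = 4 * t * (1-t) * Real.sin ((α-β)/2)^2 := by
  rw [abs_sq_combo]
  have hs : Real.sin ((α-β)/2)^2 = 1/2 - Real.cos (α-β)/2 := by
    rw [Real.sin_sq_eq_half_sub]
    have : 2 * ((α-β)/2) = α - β := by ring
    rw [this]
  rw [hs]; ring

lemma sin_pi_div_le {d : ℕ} (hd : 2 ≤ d) {x : ℝ} (h1 : π/d ≤ x) (h2 : x ≤ π - π/d) :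
    Real.sin (π/d) ≤ Real.sin x := by
  have hd0 : (0:ℝ) < d := by positivity
  have hpd : 0 < π/d := div_pos Real.pi_pos hd0
  have hpd2 : π/d ≤ π/2 := by
    apply div_le_div_of_nonneg_left Real.pi_pos.le (by norm_num)
    exact_mod_cast hd
  rcases le_total x (π/2) with hx | hx
  · exact Real.strictMonoOn_sin.monotoneOn ⟨by linarith, hpd2⟩ ⟨by linarith, hx⟩ h1
  · rw [← Real.sin_pi_sub x]
    exact Real.strictMonoOn_sin.monotoneOn ⟨by linarith, hpd2⟩ ⟨by linarith, by linarith⟩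
      (by linarith)

/-- For a probability vector supported on at most two coordinates, with values `t` and
`1−t`, the stellar mirror entanglement equals `4 sin²(π/d) t(1−t)`. -/
theorem stellar_of_rank_two (d : ℕ) (hd : 2 ≤ d) (t : ℝ) (ht0 : 0 ≤ t) (ht1 : t ≤ 1)
    (p : Fin d → ℝ) (hp : ∀ j, 0 ≤ p j) (hsum : ∑ j, p j = 1)
    (hsupp : ∃ i j : Fin d, i ≠ j ∧ p i = t ∧ p j = 1 - t ∧
      ∀ k, k ≠ i → k ≠ j → p k = 0) :
    IsLeast {x : ℝ | ∃ σ : Equiv.Perm (Fin d),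
        x = 1 - (‖∑ j : Fin d,
          Complex.exp (2 * π * Complex.I * (j.val : ℝ) / d) * (p (σ j) : ℂ)‖) ^ 2}
      (4 * Real.sin (π / d) ^ 2 * (t * (1 - t))) := by
  obtain ⟨i, j, hij, hpi, hpj, hz⟩ := hsupp
  haveI : NeZero d := ⟨by omega⟩
  have hd0 : (0:ℝ) < d := by exact_mod_cast (by omega : 0 < d)
  set θ : Fin d → ℝ := fun a => 2*π*a.val/d with hθ
  have hexp : ∀ a : Fin d, Complex.exp (2 * π * Complex.I * (a.val : ℝ) / d)
      = Complex.exp (↑(θ a) * Complex.I) := by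
    intro a; congr 1; simp only [hθ]; push_cast; ring
  have key : ∀ σ : Equiv.Perm (Fin d),
      1 - (‖∑ k : Fin d,
          Complex.exp (2 * π * Complex.I * (k.val : ℝ) / d) * (p (σ k) : ℂ)‖) ^ 2
      = 4 * t * (1-t) *
        Real.sin (π * (((σ.symm i).val : ℝ) - ((σ.symm j).val : ℝ)) / d) ^ 2 := by
    intro σ
    set a := σ.symm i with ha
    set b := σ.symm j with hb
    have hab : a ≠ b := fun h => hij (by simpa [ha, hb] using congrArg σ h)
    have hsab : σ a = i ∧ σ b = j := ⟨Equiv.apply_symm_apply σ i, Equiv.apply_symm_apply σ j⟩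
    have hsum_eq : ∑ k : Fin d,
        Complex.exp (2 * π * Complex.I * (k.val : ℝ) / d) * (p (σ k) : ℂ)
        = Complex.exp (↑(θ a) * Complex.I) * (t:ℂ)
          + Complex.exp (↑(θ b) * Complex.I) * ((1-t:ℝ):ℂ) := by
      rw [Finset.sum_eq_add_of_mem a b (Finset.mem_univ a) (Finset.mem_univ b) hab ?_]
      · rw [hexp a, hexp b, hsab.1, hsab.2, hpi, hpj]
      · intro c _ hc
        have h1 : σ c ≠ i := fun h => hc.1 (by rw [ha, ← h, Equiv.symm_apply_apply])
        have h2 : σ c ≠ j := fun h => hc.2 (by rw [hb, ← h, Equiv.symm_apply_apply])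
        rw [hz _ h1 h2]
        simp
    rw [hsum_eq, value_eq]
    congr 2
    simp only [hθ]
    field_simp
  constructor
  · -- membership: construct optimal permutation
    have h1val : ((1 : Fin d)).val = 1 := by
      rw [Fin.val_one']; exact Nat.mod_eq_of_lt (by omega)
    have h01 : (0 : Fin d) ≠ 1 := by
      intro h
      rw [Fin.ext_iff, Fin.val_zero, h1val] at h
      omega
    set τ : Equiv.Perm (Fin d) := Equiv.swap 0 i with hτ
    have hj' : τ j ≠ 0 := by
      intro h
      have h2 := congrArg τ h
      simp only [hτ, Equiv.swap_apply_self, Equiv.swap_apply_left] at h2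
      exact hij h2.symm
    set σ : Equiv.Perm (Fin d) := τ * Equiv.swap 1 (τ j) with hσ
    have hσ0 : σ 0 = i := by
      simp only [hσ, Equiv.Perm.mul_apply]
      rw [Equiv.swap_apply_of_ne_of_ne h01 (Ne.symm hj')]
      rw [hτ, Equiv.swap_apply_left]
    have hσ1 : σ 1 = j := by
      simp only [hσ, Equiv.Perm.mul_apply, Equiv.swap_apply_left]
      simp [hτ, Equiv.swap_apply_self]
    refine ⟨σ, ?_⟩
    have hs1 : σ.symm i = 0 := by rw [Equiv.symm_apply_eq]; exact hσ0.symm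
    have hs2 : σ.symm j = 1 := by rw [Equiv.symm_apply_eq]; exact hσ1.symm
    rw [key σ, hs1, hs2, Fin.val_zero, h1val]
    have harg : π * (((0:ℕ):ℝ) - ((1:ℕ):ℝ)) / d = -(π/d) := by push_cast; ring
    rw [harg, Real.sin_neg, neg_sq]
    ring
  · -- lower bound
    rintro x ⟨σ, rfl⟩
    rw [key σ]
    set a := σ.symm i with ha
    set b := σ.symm j with hb
    have hab : a ≠ b := fun h => hij (by simpa [ha, hb] using congrArg σ h)
    have habv : ((a.val : ℤ)) ≠ (b.val : ℤ) := by
      have : a.val ≠ b.val := fun h => hab (Fin.ext h)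
      exact_mod_cast this
    set u : ℝ := ((a.val : ℝ) - b.val) with hu
    have hcast : |u| = ((|(a.val : ℤ) - (b.val : ℤ)| : ℤ) : ℝ) := by
      rw [hu]; push_cast; ring_nf
    have huabs : Real.sin (π * u / d) ^ 2 = Real.sin (π * |u| / d) ^ 2 := by
      rcases abs_cases u with ⟨h, _⟩ | ⟨h, _⟩
      · rw [h]
      · rw [h]
        have h2 : π * -u / d = -(π * u / d) := by ring
        rw [h2, Real.sin_neg, neg_sq]
    have h1u : (1:ℝ) ≤ |u| := by
      rw [hcast]
      exact_mod_cast Int.one_le_abs (sub_ne_zero.mpr habv)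
    have hud : |u| ≤ (d:ℝ) - 1 := by
      have ha' : (a.val : ℤ) < d := by exact_mod_cast a.isLt
      have hb' : (b.val : ℤ) < d := by exact_mod_cast b.isLt
      have h3 : |(a.val : ℤ) - (b.val : ℤ)| ≤ (d:ℤ) - 1 := abs_le.mpr ⟨by omega, by omega⟩
      rw [hcast]
      exact_mod_cast h3
    have hπ := Real.pi_pos
    have hlb : π/d ≤ π * |u| / d := by
      rw [div_le_div_iff₀ hd0 hd0]
      nlinarith [mul_le_mul_of_nonneg_right (mul_le_mul_of_nonneg_left h1u hπ.le) hd0.le]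
    have hub : π * |u| / d ≤ π - π/d := by
      have h4 : π * |u| ≤ π * ((d:ℝ) - 1) := mul_le_mul_of_nonneg_left hud hπ.le
      have hπd : π/d * d = π := div_mul_cancel₀ _ (ne_of_gt hd0)
      rw [div_le_iff₀ hd0]
      nlinarith [hπd, h4]
    have hsin := sin_pi_div_le hd hlb hub
    have hsin0 : 0 ≤ Real.sin (π/d) := by
      apply Real.sin_nonneg_of_nonneg_of_le_pi
      · positivity
      · rw [div_le_iff₀ hd0]; nlinarith
    have hsq : Real.sin (π/d)^2 ≤ Real.sin (π * |u| / d)^2 :=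
      pow_le_pow_left₀ hsin0 hsin 2
    rw [huabs]
    have htt : 0 ≤ t * (1 - t) := mul_nonneg ht0 (by linarith)
    nlinarith [mul_le_mul_of_nonneg_right hsq htt]
end

section
/- Let ρ be a d×d density matrix and Λ = {λ_1,…,λ_d} a fixed multiset of unimodular complex numbers. Then the maximum of |Tr(W ρ)| over all unitary W with spectrum Λ is attained at a W that commutes with ρ; moreover this maximum equals max over permutations σ of |∑_i λ_{σ(i)} p_i| where p_i are the eigenvalues of ρ. -/
open Matrix
open scoped ComplexOrder

lemma perm_star (d : ℕ) (σ : Equiv.Perm (Fin d)) :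
    star (σ.permMatrix ℂ) = (σ⁻¹).permMatrix ℂ := by
  have : (σ⁻¹ : Equiv.Perm (Fin d)) = (σ : Fin d ≃ Fin d).symm := rfl
  rw [this]
  unfold Equiv.Perm.permMatrix
  rw [Equiv.toPEquiv_symm, PEquiv.toMatrix_symm]
  ext i j
  simp only [conjTranspose_apply, transpose_apply, PEquiv.toMatrix_apply]
  split <;> simp_all [Option.mem_def]

lemma perm_mul_star (d : ℕ) (σ : Equiv.Perm (Fin d)) :
    σ.permMatrix ℂ * star (σ.permMatrix ℂ) = 1 := by
  rw [perm_star, Equiv.Perm.permMatrix, Equiv.Perm.permMatrix, ← PEquiv.toMatrix_trans,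
    ← Equiv.toPEquiv_trans]
  have : (σ : Fin d ≃ Fin d).trans (σ⁻¹ : Equiv.Perm (Fin d)) = Equiv.refl (Fin d) :=
    Equiv.self_trans_symm σ
  rw [this, Equiv.toPEquiv_refl, PEquiv.toMatrix_refl]

lemma perm_unitary (d : ℕ) (σ : Equiv.Perm (Fin d)) :
    σ.permMatrix ℂ ∈ Matrix.unitaryGroup (Fin d) ℂ :=
  mem_unitaryGroup_iff.mpr (perm_mul_star d σ)

lemma perm_conj (d : ℕ) (σ : Equiv.Perm (Fin d)) (lam : Fin d → ℂ) :
    σ.permMatrix ℂ * Matrix.diagonal lam * star (σ.permMatrix ℂ) =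
      Matrix.diagonal (fun i => lam (σ i)) := by
  rw [perm_star, Equiv.Perm.permMatrix, PEquiv.toMatrix_toPEquiv_mul,
    Equiv.Perm.permMatrix, PEquiv.mul_toMatrix_toPEquiv, submatrix_submatrix]
  have : ((σ⁻¹ : Equiv.Perm (Fin d)) : Fin d ≃ Fin d).symm = σ := rfl
  rw [this]
  simp only [Function.comp_id, Function.id_comp]
  rw [submatrix_diagonal_equiv]
  rfl

lemma conj_trace (d : ℕ) (U X : Matrix (Fin d) (Fin d) ℂ)
    (hU : U ∈ Matrix.unitaryGroup (Fin d) ℂ) :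
    (U * X * star U).trace = X.trace := by
  rw [trace_mul_comm, ← mul_assoc, mem_unitaryGroup_iff'.mp hU, one_mul]

/-- The maximum of `|Tr(W ρ)|` over unitaries `W` with fixed unimodular spectrum `Λ`
is attained at some `W` commuting with `ρ`, and equals
`max_σ |∑_i λ_{σ(i)} p_i|` where `p` are the eigenvalues of `ρ`. -/
theorem max_abs_trace_fixed_spectrum (d : ℕ) (ρ : Matrix (Fin d) (Fin d) ℂ)
    (hρ : ρ.PosSemidef) (htr : ρ.trace = 1)
    (p : Fin d → ℝ)
    (hdiag : ∃ U ∈ Matrix.unitaryGroup (Fin d) ℂ,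
      ρ = U * Matrix.diagonal (fun i => ((p i : ℝ) : ℂ)) * star U)
    (lam : Fin d → ℂ) (hlam : ∀ i, ‖lam i‖ = 1) :
    ∃ W : Matrix (Fin d) (Fin d) ℂ,
      (∃ V ∈ Matrix.unitaryGroup (Fin d) ℂ, W = V * Matrix.diagonal lam * star V) ∧
      W * ρ = ρ * W ∧
      IsGreatest {x : ℝ | ∃ V ∈ Matrix.unitaryGroup (Fin d) ℂ,
          x = ‖(V * Matrix.diagonal lam * star V * ρ).trace‖}
        (‖(W * ρ).trace‖) ∧
      (∃ σ : Equiv.Perm (Fin d),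
        ‖(W * ρ).trace‖ = ‖∑ i, lam (σ i) * (p i : ℂ)‖ ∧
        ∀ τ : Equiv.Perm (Fin d),
          ‖∑ i, lam (τ i) * (p i : ℂ)‖ ≤ ‖(W * ρ).trace‖) := by
  classical
  obtain ⟨U, hU, hρeq⟩ := hdiag
  set L : Matrix (Fin d) (Fin d) ℂ := Matrix.diagonal lam with hL
  set Dp : Matrix (Fin d) (Fin d) ℂ := Matrix.diagonal (fun i => ((p i : ℝ) : ℂ)) with hDp
  set z : Equiv.Perm (Fin d) → ℂ := fun τ => ∑ i, lam (τ i) * (p i : ℂ) with hz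
  obtain ⟨σ0, -, hσ0⟩ := Finset.exists_max_image Finset.univ
    (fun τ : Equiv.Perm (Fin d) => ‖z τ‖) ⟨1, Finset.mem_univ 1⟩
  have hmax : ∀ τ, ‖z τ‖ ≤ ‖z σ0‖ := fun τ => hσ0 τ (Finset.mem_univ τ)
  set W : Matrix (Fin d) (Fin d) ℂ :=
    U * Matrix.diagonal (fun i => lam (σ0 i)) * star U with hW
  have hUU : star U * U = 1 := mem_unitaryGroup_iff'.mp hU
  have hspec : ∃ V ∈ Matrix.unitaryGroup (Fin d) ℂ, W = V * L * star V := by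
    refine ⟨U * σ0.permMatrix ℂ, mul_mem hU (perm_unitary d σ0), ?_⟩
    rw [hW, StarMul.star_mul, ← perm_conj d σ0 lam]
    simp only [mul_assoc, hL]
  have h1 : ∀ X Y : Matrix (Fin d) (Fin d) ℂ,
      (U * X * star U) * (U * Y * star U) = U * (X * Y) * star U := by
    intro X Y
    calc (U * X * star U) * (U * Y * star U)
          = U * X * (star U * U) * Y * star U := by simp only [mul_assoc]
      _ = U * (X * Y) * star U := by rw [hUU]; simp only [mul_one, mul_assoc]
  have hcomm : W * ρ = ρ * W := by
    rw [hW, hρeq, h1, h1, hDp, diagonal_mul_diagonal, diagonal_mul_diagonal,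
      show (fun i => lam (σ0 i) * ((p i : ℝ) : ℂ)) = fun i => ((p i : ℝ) : ℂ) * lam (σ0 i)
        from funext fun i => mul_comm _ _]
  have htrW : (W * ρ).trace = z σ0 := by
    rw [hW, hρeq, h1, conj_trace d U _ hU, hDp, diagonal_mul_diagonal, trace_diagonal]
  have hbound : ∀ V ∈ Matrix.unitaryGroup (Fin d) ℂ,
      ‖(V * L * star V * ρ).trace‖ ≤ ‖z σ0‖ := by
    intro V hV
    set A : Matrix (Fin d) (Fin d) ℂ := star U * V with hA
    have hAU : A ∈ Matrix.unitaryGroup (Fin d) ℂ := by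
      rw [mem_unitaryGroup_iff, hA, StarMul.star_mul, star_star]
      calc star U * V * (star V * U) = star U * (V * star V) * U := by simp only [mul_assoc]
        _ = 1 := by rw [mem_unitaryGroup_iff.mp hV, mul_one]; exact hUU
    have hstarA : star A = star V * U := by rw [hA, StarMul.star_mul, star_star]
    have ht : (V * L * star V * ρ).trace = (A * L * star A * Dp).trace := by
      rw [hρeq]
      have : V * L * star V * (U * Dp * star U) = U * (A * L * star A * Dp) * star U := by
        rw [hA, hstarA]
        calc V * L * star V * (U * Dp * star U)
            = (U * star U) * (V * L * (star V * U) * Dp * star U) := by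
              rw [mem_unitaryGroup_iff.mp hU]; simp only [one_mul, mul_assoc]
          _ = U * (star U * V * L * (star V * U) * Dp) * star U := by
              simp only [mul_assoc]
      rw [this, conj_trace d U _ hU]
    rw [ht]
    set B : Matrix (Fin d) (Fin d) ℝ := Matrix.of fun i j => Complex.normSq (A i j) with hB
    have hexp : (A * L * star A * Dp).trace
        = ∑ i, ∑ j, ((B i j : ℝ) : ℂ) * (lam j * (p i : ℂ)) := by
      rw [Matrix.trace]
      congr 1
      ext i
      rw [Matrix.diag_apply, hDp, Matrix.mul_diagonal]
      rw [show (A * L * star A) i i = ∑ j, A i j * lam j * star (A i j) by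
        rw [Matrix.mul_apply]
        simp only [hL, Matrix.mul_diagonal, Matrix.star_apply]]
      rw [Finset.sum_mul]
      refine Finset.sum_congr rfl fun j _ => ?_
      have hc : A i j * star (A i j) = ((Complex.normSq (A i j) : ℝ) : ℂ) := by
        rw [Complex.star_def, Complex.mul_conj]
      calc A i j * lam j * star (A i j) * (p i : ℂ)
          = (A i j * star (A i j)) * (lam j * (p i : ℂ)) := by ring
        _ = ((B i j : ℝ) : ℂ) * (lam j * (p i : ℂ)) := by rw [hc]; rfl
    have hBds : B ∈ doublyStochastic ℝ (Fin d) := by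
      rw [mem_doublyStochastic_iff_sum]
      refine ⟨fun i j => Complex.normSq_nonneg _, fun i => ?_, fun j => ?_⟩
      · have h1' : (A * star A) i i = 1 := by rw [mem_unitaryGroup_iff.mp hAU]; simp
        have h2 : (A * star A) i i = ((∑ j, B i j : ℝ) : ℂ) := by
          push_cast
          rw [Matrix.mul_apply]
          refine Finset.sum_congr rfl fun j _ => ?_
          rw [Matrix.star_apply, Complex.star_def, Complex.mul_conj]
          rfl
        rw [h2] at h1'
        exact_mod_cast h1'
      · have h1' : (star A * A) j j = 1 := by rw [mem_unitaryGroup_iff'.mp hAU]; simp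
        have h2 : (star A * A) j j = ((∑ i, B i j : ℝ) : ℂ) := by
          push_cast
          rw [Matrix.mul_apply]
          refine Finset.sum_congr rfl fun i _ => ?_
          rw [Matrix.star_apply, Complex.star_def, mul_comm, Complex.mul_conj]
          rfl
        rw [h2] at h1'
        exact_mod_cast h1'
    obtain ⟨w, hw0, hw1, hwB⟩ := exists_eq_sum_perm_of_mem_doublyStochastic hBds
    have hBij : ∀ i j, B i j = ∑ σ : Equiv.Perm (Fin d), w σ * (if σ i = j then 1 else 0) := by
      intro i j
      rw [← hwB]
      simp only [Finset.sum_apply, Matrix.sum_apply, Matrix.smul_apply, smul_eq_mul]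
      refine Finset.sum_congr rfl fun σ _ => ?_
      congr 1
      simp [Equiv.Perm.permMatrix, PEquiv.toMatrix_apply, Equiv.toPEquiv_apply, Option.mem_def]
    have hsum : (A * L * star A * Dp).trace
        = ∑ σ : Equiv.Perm (Fin d), ((w σ : ℝ) : ℂ) * z σ := by
      rw [hexp]
      have key : ∀ i j, ((B i j : ℝ) : ℂ) * (lam j * (p i : ℂ))
          = ∑ σ : Equiv.Perm (Fin d),
              ((w σ : ℝ) : ℂ) * (if σ i = j then lam j * (p i : ℂ) else 0) := by
        intro i j
        rw [hBij i j]
        push_cast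
        rw [Finset.sum_mul]
        refine Finset.sum_congr rfl fun σ _ => ?_
        split <;> simp <;> ring
      simp only [key]
      calc ∑ i, ∑ j, ∑ σ : Equiv.Perm (Fin d),
              ((w σ : ℝ) : ℂ) * (if σ i = j then lam j * (p i : ℂ) else 0)
          = ∑ i, ∑ σ : Equiv.Perm (Fin d), ∑ j,
              ((w σ : ℝ) : ℂ) * (if σ i = j then lam j * (p i : ℂ) else 0) :=
            Finset.sum_congr rfl fun i _ => Finset.sum_comm
        _ = ∑ σ : Equiv.Perm (Fin d), ∑ i, ∑ j,
              ((w σ : ℝ) : ℂ) * (if σ i = j then lam j * (p i : ℂ) else 0) := Finset.sum_comm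
        _ = ∑ σ : Equiv.Perm (Fin d), ((w σ : ℝ) : ℂ) * z σ := by
            refine Finset.sum_congr rfl fun σ _ => ?_
            rw [hz, Finset.mul_sum]
            refine Finset.sum_congr rfl fun i _ => ?_
            rw [← Finset.mul_sum]
            congr 1
            simp
    rw [hsum]
    calc ‖∑ σ : Equiv.Perm (Fin d), ((w σ : ℝ) : ℂ) * z σ‖
        ≤ ∑ σ : Equiv.Perm (Fin d), ‖((w σ : ℝ) : ℂ) * z σ‖ :=
          norm_sum_le _ _
      _ = ∑ σ : Equiv.Perm (Fin d), w σ * ‖z σ‖ := by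
          refine Finset.sum_congr rfl fun σ _ => ?_
          rw [norm_mul, Complex.norm_real, Real.norm_eq_abs, abs_of_nonneg (hw0 σ)]
      _ ≤ ∑ σ : Equiv.Perm (Fin d), w σ * ‖z σ0‖ :=
          Finset.sum_le_sum fun σ _ => mul_le_mul_of_nonneg_left (hmax σ) (hw0 σ)
      _ = ‖z σ0‖ := by rw [← Finset.sum_mul, hw1, one_mul]
  obtain ⟨V0, hV0, hWV0⟩ := hspec
  refine ⟨W, ⟨V0, hV0, hWV0⟩, hcomm, ⟨⟨V0, hV0, by rw [hWV0]⟩, ?_⟩, σ0, ?_, ?_⟩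
  · rintro x ⟨V, hV, rfl⟩
    rw [htrW]
    exact hbound V hV
  · rw [htrW]
  · intro τ
    rw [htrW]
    exact hmax τ
end

section
/- Monotonicity under local operations: let ρ be a d×d density matrix, let {A_i} be matrices with ∑_i A_i† A_i = I, and set p_i = Tr(A_i ρ A_i†), ρ_i = A_i ρ A_i†/p_i (when p_i > 0). Then for any fixed spectrum Λ of unimodular numbers, ∑_i p_i · max_{W} |Tr(ρ_i W)| ≥ max_{W} |Tr(ρ W)|, where each maximum is over unitaries W with spectrum Λ. -/
open Matrix
open scoped ComplexOrder

open Polynomial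

lemma my_eval_charpoly {m : Type*} [Fintype m] [DecidableEq m]
    (M : Matrix m m ℂ) (x : ℂ) : M.charpoly.eval x = det (x • (1 : Matrix m m ℂ) - M) := by
  rw [Matrix.charpoly, ← Polynomial.coe_evalRingHom, RingHom.map_det]
  congr 1
  ext i j
  by_cases h : i = j
  · subst h
    simp [Matrix.charmatrix_apply_eq, Matrix.one_apply]
  · simp [Matrix.charmatrix_apply_ne _ _ _ h, Matrix.one_apply, h]

lemma my_det_smul_one_sub (x : ℂ) (hx : x ≠ 0) {m : Type*} [Fintype m] [DecidableEq m]
    (P Q : Matrix m m ℂ) :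
    det (x • (1 : Matrix m m ℂ) - P * Q) = det (x • (1 : Matrix m m ℂ) - Q * P) := by
  have hinv : ((x⁻¹ • 1 : Matrix m m ℂ)) * (x • 1) = 1 := by
    rw [Matrix.smul_mul, Matrix.mul_smul, smul_smul, inv_mul_cancel₀ hx, one_smul, one_mul]
  haveI : Invertible (x • (1 : Matrix m m ℂ)) := invertibleOfLeftInverse _ _ hinv
  have hInvOf : ⅟ (x • (1 : Matrix m m ℂ)) = x⁻¹ • 1 := invOf_eq_left_inv hinv
  have h1 : (Matrix.fromBlocks (x • (1 : Matrix m m ℂ)) P Q 1).det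
      = det (x • (1 : Matrix m m ℂ) - P * Q) := by
    haveI : Invertible (1 : Matrix m m ℂ) := invertibleOne
    rw [Matrix.det_fromBlocks₂₂]
    simp [Matrix.mul_one, invOf_one]
  have h2 : (Matrix.fromBlocks (x • (1 : Matrix m m ℂ)) P Q 1).det
      = det (x • (1 : Matrix m m ℂ) - Q * P) := by
    rw [Matrix.det_fromBlocks₁₁, hInvOf, ← Matrix.det_mul]
    congr 1
    rw [Matrix.mul_sub, Matrix.mul_one]
    congr 1
    simp [Matrix.smul_mul, Matrix.mul_smul, smul_smul, mul_inv_cancel₀ hx, inv_mul_cancel₀ hx]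
  rw [← h1, h2]

lemma my_charpoly_mul_comm {m : Type*} [Fintype m] [DecidableEq m] (P Q : Matrix m m ℂ) :
    (P * Q).charpoly = (Q * P).charpoly := by
  apply Polynomial.eq_of_infinite_eval_eq
  apply Set.Infinite.mono (s := {(0 : ℂ)}ᶜ)
  · intro x hx
    simp only [Set.mem_setOf_eq, my_eval_charpoly]
    exact my_det_smul_one_sub x hx P Q
  · exact Set.Finite.infinite_compl (Set.finite_singleton 0)

lemma my_charpoly_unitary_conj {m : Type*} [Fintype m] [DecidableEq m]
    (U M : Matrix m m ℂ) (hU : U ∈ Matrix.unitaryGroup m ℂ) :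
    (U * M * star U).charpoly = M.charpoly := by
  rw [my_charpoly_mul_comm, ← mul_assoc,
    (Matrix.mem_unitaryGroup_iff'.mp hU), one_mul]

lemma my_charpoly_diagonal {k : ℕ} (f : Fin k → ℂ) :
    (Matrix.diagonal f).charpoly = ∏ j, (X - C (f j)) := by
  rw [Matrix.charpoly_of_upperTriangular _ (Matrix.blockTriangular_diagonal f)]
  simp

lemma my_charpoly_hermitian {k : ℕ} {M : Matrix (Fin k) (Fin k) ℂ} (hM : M.IsHermitian) :
    M.charpoly = ∏ j, (X - C ((hM.eigenvalues j : ℝ) : ℂ)) := by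
  conv_lhs => rw [hM.spectral_theorem]
  simp only [Unitary.conjStarAlgAut_apply, Unitary.coe_star]
  rw [my_charpoly_unitary_conj _ _ (hM.eigenvectorUnitary.2), my_charpoly_diagonal]
  rfl

lemma my_exists_perm {k : ℕ} (μ ν : Fin k → ℝ)
    (h : Multiset.map μ Finset.univ.val = Multiset.map ν Finset.univ.val) :
    ∃ σ : Equiv.Perm (Fin k), μ = ν ∘ σ := by
  have hperm : List.Perm (List.ofFn μ) (List.ofFn ν) := by
    rw [← Multiset.coe_eq_coe, ← Fin.univ_val_map, ← Fin.univ_val_map]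
    exact h
  have h1 : List.Perm (List.ofFn (μ ∘ Tuple.sort μ)) (List.ofFn (ν ∘ Tuple.sort ν)) :=
    ((Tuple.sort μ).ofFn_comp_perm μ).trans (hperm.trans ((Tuple.sort ν).ofFn_comp_perm ν).symm)
  have h2 : List.ofFn (μ ∘ Tuple.sort μ) = List.ofFn (ν ∘ Tuple.sort ν) :=
    List.Perm.eq_of_sortedLE (Tuple.monotone_sort μ).sortedLE_ofFn
      (Tuple.monotone_sort ν).sortedLE_ofFn h1
  have h3 : μ ∘ Tuple.sort μ = ν ∘ Tuple.sort ν := List.ofFn_injective h2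
  refine ⟨(Tuple.sort μ).symm.trans (Tuple.sort ν), ?_⟩
  funext j
  have := congrFun h3 ((Tuple.sort μ).symm j)
  simpa using this

lemma my_perm_star (k : ℕ) (σ : Equiv.Perm (Fin k)) :
    star ((1 : Matrix (Fin k) (Fin k) ℂ).submatrix ⇑σ.symm id)
      = (1 : Matrix (Fin k) (Fin k) ℂ).submatrix id ⇑σ.symm := by
  ext i j
  simp [Matrix.star_apply, Matrix.submatrix_apply, Matrix.one_apply, eq_comm]

lemma my_perm_unitary (k : ℕ) (σ : Equiv.Perm (Fin k)) :
    (1 : Matrix (Fin k) (Fin k) ℂ).submatrix ⇑σ.symm id ∈ Matrix.unitaryGroup (Fin k) ℂ := by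
  rw [Matrix.mem_unitaryGroup_iff, my_perm_star]
  ext i j
  simp [Matrix.mul_apply, Matrix.submatrix_apply, Matrix.one_apply]

lemma my_perm_conj (k : ℕ) (σ : Equiv.Perm (Fin k)) (g : Fin k → ℂ) :
    (Matrix.diagonal g).submatrix ⇑σ ⇑σ
      = star ((1 : Matrix (Fin k) (Fin k) ℂ).submatrix ⇑σ.symm id)
        * Matrix.diagonal g * ((1 : Matrix (Fin k) (Fin k) ℂ).submatrix ⇑σ.symm id) := by
  rw [my_perm_star]
  ext i j
  simp only [Matrix.mul_apply, Matrix.submatrix_apply, Matrix.one_apply, Matrix.diagonal_apply,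
    Equiv.eq_symm_apply, id_eq]
  rw [Finset.sum_eq_single (σ j)]
  · by_cases h : i = j <;> simp [h]
  · intro b _ hb
    simp [Equiv.symm_apply_eq, hb]
  · intro h
    exact absurd (Finset.mem_univ _) h

lemma my_unitary_equiv {k : ℕ} (B : Matrix (Fin k) (Fin k) ℂ) :
    ∃ U ∈ Matrix.unitaryGroup (Fin k) ℂ,
      star B * B = star U * (B * star B) * U := by
  have h₁ : (Bᴴ * B).PosSemidef := Matrix.posSemidef_conjTranspose_mul_self B
  have h₂ : (B * Bᴴ).PosSemidef := Matrix.posSemidef_self_mul_conjTranspose B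
  set μ : Fin k → ℝ := h₁.1.eigenvalues with hμ
  set ν : Fin k → ℝ := h₂.1.eigenvalues with hν
  -- multiset equality of eigenvalues
  have hch : (Bᴴ * B).charpoly = (B * Bᴴ).charpoly := my_charpoly_mul_comm Bᴴ B
  rw [my_charpoly_hermitian h₁.1, my_charpoly_hermitian h₂.1] at hch
  have hmult : Multiset.map μ Finset.univ.val = Multiset.map ν Finset.univ.val := by
    apply Multiset.map_injective (Complex.ofReal_injective)
    have := congrArg Polynomial.roots hch
    rw [Finset.prod_eq_multiset_prod, Finset.prod_eq_multiset_prod,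
      show (Multiset.map (fun j => Polynomial.X - Polynomial.C ((μ j : ℝ) : ℂ)) Finset.univ.val)
        = Multiset.map (fun a => Polynomial.X - Polynomial.C a)
            (Multiset.map (fun j => ((μ j : ℝ) : ℂ)) Finset.univ.val) by
          rw [Multiset.map_map]; rfl,
      show (Multiset.map (fun j => Polynomial.X - Polynomial.C ((ν j : ℝ) : ℂ)) Finset.univ.val)
        = Multiset.map (fun a => Polynomial.X - Polynomial.C a)
            (Multiset.map (fun j => ((ν j : ℝ) : ℂ)) Finset.univ.val) by
          rw [Multiset.map_map]; rfl,
      Polynomial.roots_multiset_prod_X_sub_C, Polynomial.roots_multiset_prod_X_sub_C] at this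
    rw [Multiset.map_map, Multiset.map_map]
    exact this
  obtain ⟨σ, hσ⟩ := my_exists_perm μ ν hmult
  set P := (1 : Matrix (Fin k) (Fin k) ℂ).submatrix ⇑σ.symm id with hP
  set U₁ := (h₁.1.eigenvectorUnitary : Matrix (Fin k) (Fin k) ℂ) with hU₁
  set U₂ := (h₂.1.eigenvectorUnitary : Matrix (Fin k) (Fin k) ℂ) with hU₂
  have e1 : Bᴴ * B = U₁ * Matrix.diagonal ((fun r : ℝ => (r : ℂ)) ∘ μ) * star U₁ :=
    h₁.1.spectral_theorem
  have e2 : star U₂ * (B * Bᴴ) * U₂ = Matrix.diagonal ((fun r : ℝ => (r : ℂ)) ∘ ν) :=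
    (Unitary.conjStarAlgAut_star_apply (S := ℂ) _ _).symm.trans
      h₂.1.conjStarAlgAut_star_eigenvectorUnitary
  have hdiag : Matrix.diagonal ((fun r : ℝ => (r : ℂ)) ∘ μ)
      = star P * Matrix.diagonal ((fun r : ℝ => (r : ℂ)) ∘ ν) * P := by
    rw [← my_perm_conj k σ, Matrix.submatrix_diagonal _ _ σ.injective]
    rw [hσ]
    rfl
  refine ⟨U₂ * P * star U₁, ?_, ?_⟩
  · exact mul_mem (mul_mem h₂.1.eigenvectorUnitary.2 (my_perm_unitary k σ))
      (Unitary.star_mem h₁.1.eigenvectorUnitary.2)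
  · have : star B * B = Bᴴ * B := by rw [Matrix.star_eq_conjTranspose]
    rw [this, e1, hdiag, ← e2]
    simp only [Matrix.star_eq_conjTranspose, Matrix.conjTranspose_mul,
      Matrix.conjTranspose_conjTranspose, mul_assoc]

lemma my_diag_nonneg {k : ℕ} {M : Matrix (Fin k) (Fin k) ℂ} (hM : M.PosSemidef) (j : Fin k) :
    0 ≤ M j j := by
  exact hM.diag_nonneg

lemma my_trace_nonneg {k : ℕ} {M : Matrix (Fin k) (Fin k) ℂ} (hM : M.PosSemidef) :
    0 ≤ M.trace := by
  rw [Matrix.trace]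
  exact Finset.sum_nonneg fun j _ => my_diag_nonneg hM j

lemma my_abs_eq_re {z : ℂ} (hz : 0 ≤ z) : ‖z‖ = z.re := by
  obtain ⟨h1, h2⟩ := Complex.le_def.mp hz
  rw [show z = ((z.re : ℝ) : ℂ) by
    apply Complex.ext <;> simp [← h2], Complex.norm_real, Real.norm_eq_abs]
  simp only [Complex.ofReal_re]
  exact abs_of_nonneg (by simpa using h1)

lemma my_smul_posSemidef {k : ℕ} {Q : Matrix (Fin k) (Fin k) ℂ} (hQ : Q.PosSemidef)
    {c : ℝ} (hc : 0 ≤ c) : (((c : ℂ)) • Q).PosSemidef := by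
  constructor
  · rw [Matrix.IsHermitian, Matrix.conjTranspose_smul, hQ.1]
    congr 1
    simp [Complex.star_def, Complex.conj_ofReal]
  · intro x
    exact (hQ.smul (Complex.zero_le_real.mpr hc)).2 x

lemma my_trace_bound {k : ℕ} (lam : Fin k → ℂ) (hlam : ∀ j, ‖lam j‖ = 1)
    {σm : Matrix (Fin k) (Fin k) ℂ} (hσ : σm.PosSemidef)
    (V : Matrix (Fin k) (Fin k) ℂ) (hV : V ∈ Matrix.unitaryGroup (Fin k) ℂ) :
    ‖(σm * (V * Matrix.diagonal lam * star V)).trace‖ ≤ (σm.trace).re := by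
  set N := star V * σm * V with hN
  have hNps : N.PosSemidef := by
    have := hσ.conjTranspose_mul_mul_same V
    simpa [Matrix.star_eq_conjTranspose, hN] using this
  have htr : (σm * (V * Matrix.diagonal lam * star V)).trace = ∑ j, N j j * lam j := by
    have h1 : σm * (V * Matrix.diagonal lam * star V)
        = (σm * (V * Matrix.diagonal lam)) * star V := by
      simp only [mul_assoc]
    rw [h1, Matrix.trace_mul_comm, hN]
    have h2 : star V * (σm * (V * Matrix.diagonal lam))
        = (star V * σm * V) * Matrix.diagonal lam := by simp only [mul_assoc]
    rw [h2, Matrix.trace]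
    simp [Matrix.diag, Matrix.mul_diagonal]
  rw [htr]
  calc ‖∑ j, N j j * lam j‖ ≤ ∑ j, ‖N j j * lam j‖ :=
        norm_sum_le _ _
    _ = ∑ j, (N j j).re := by
        refine Finset.sum_congr rfl fun j _ => ?_
        rw [norm_mul, hlam j, mul_one, my_abs_eq_re (my_diag_nonneg hNps j)]
    _ = (N.trace).re := by rw [Matrix.trace]; exact (Complex.re_sum _ _).symm
    _ = (σm.trace).re := by
        congr 1
        rw [hN, Matrix.trace_mul_cycle, Matrix.mem_unitaryGroup_iff.mp hV, one_mul]

/-- Monotonicity under local operations: for a density matrix `ρ`, Kraus operators with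
`∑ Aᵢ†Aᵢ = 1`, outcome probabilities `pᵢ = Tr(Aᵢ ρ Aᵢ†)` and post-measurement states
`ρᵢ` with `pᵢ ρᵢ = Aᵢ ρ Aᵢ†`, the averaged maximal fidelity over unitaries with a fixed
unimodular spectrum `Λ` does not decrease:
`∑ᵢ pᵢ · max_W |Tr(ρᵢ W)| ≥ max_W |Tr(ρ W)|`. -/
theorem mirror_fidelity_monotone (d n : ℕ) (ρ : Matrix (Fin d) (Fin d) ℂ)
    (hρ : ρ.PosSemidef) (htr : ρ.trace = 1)
    (A : Fin n → Matrix (Fin d) (Fin d) ℂ)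
    (hA : ∑ i, star (A i) * A i = 1)
    (p : Fin n → ℝ) (hp : ∀ i, ((p i : ℝ) : ℂ) = (A i * ρ * star (A i)).trace)
    (ρi : Fin n → Matrix (Fin d) (Fin d) ℂ)
    (hρi : ∀ i, ((p i : ℝ) : ℂ) • ρi i = A i * ρ * star (A i))
    (lam : Fin d → ℂ) (hlam : ∀ j, ‖lam j‖ = 1) :
    sSup {x : ℝ | ∃ V ∈ Matrix.unitaryGroup (Fin d) ℂ,
        x = ‖(ρ * (V * Matrix.diagonal lam * star V)).trace‖} ≤
      ∑ i, p i * sSup {x : ℝ | ∃ V ∈ Matrix.unitaryGroup (Fin d) ℂ,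
        x = ‖(ρi i * (V * Matrix.diagonal lam * star V)).trace‖} := by
  classical
  obtain ⟨r, hrH, hrr⟩ : ∃ r : Matrix (Fin d) (Fin d) ℂ, star r = r ∧ r * r = ρ := by
    open scoped MatrixOrder in
    exact ⟨CFC.sqrt ρ, (CFC.sqrt_nonneg ρ).posSemidef.1, CFC.sqrt_mul_sqrt_self ρ hρ.nonneg⟩
  -- p is nonnegative
  have hQps : ∀ i, (A i * ρ * star (A i)).PosSemidef := by
    intro i
    have := hρ.mul_mul_conjTranspose_same (A i)
    simpa [Matrix.star_eq_conjTranspose] using this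
  have hppos : ∀ i, 0 ≤ p i := by
    intro i
    have := my_trace_nonneg (hQps i)
    rw [← hp i] at this
    exact Complex.zero_le_real.mp this
  -- the suprema are nonnegative
  have hSnonneg : ∀ i, 0 ≤ sSup {x : ℝ | ∃ V ∈ Matrix.unitaryGroup (Fin d) ℂ,
      x = ‖(ρi i * (V * Matrix.diagonal lam * star V)).trace‖} := by
    intro i
    apply Real.sSup_nonneg
    rintro x ⟨V, hV, rfl⟩
    exact norm_nonneg _
  apply Real.sSup_le _ (Finset.sum_nonneg fun i _ => mul_nonneg (hppos i) (hSnonneg i))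
  rintro x ⟨V₀, hV₀, rfl⟩
  set W := V₀ * Matrix.diagonal lam * star V₀ with hW
  -- split the trace
  have hsplit : (ρ * W).trace = ∑ i, ((star (A i) * A i) * (r * W * r)).trace := by
    rw [← Matrix.trace_sum, ← Finset.sum_mul, hA, one_mul]
    conv_rhs => rw [Matrix.trace_mul_cycle, ← mul_assoc, hrr]
    rw [mul_assoc]
  -- per-term bound
  have key : ∀ i, ‖((star (A i) * A i) * (r * W * r)).trace‖
      ≤ p i * sSup {x : ℝ | ∃ V ∈ Matrix.unitaryGroup (Fin d) ℂ,
        x = ‖(ρi i * (V * Matrix.diagonal lam * star V)).trace‖} := by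
    intro i
    obtain ⟨U, hU, hEq⟩ := my_unitary_equiv (A i * r)
    have hstarB : star (A i * r) = r * star (A i) := by
      rw [Matrix.star_mul, hrH]
    have hBBt : (A i * r) * star (A i * r) = A i * ρ * star (A i) := by
      rw [hstarB, ← hrr]
      simp only [mul_assoc]
    -- rewrite the trace
    have c1 : ((star (A i) * A i) * (r * W * r)).trace
        = ((star (A i * r) * (A i * r)) * W).trace := by
      rw [hstarB]
      have l1 : (star (A i) * A i) * (r * W * r) = (star (A i) * (A i * (r * W))) * r := by
        simp only [mul_assoc]
      have l2 : (r * star (A i)) * (A i * r) * W = r * ((star (A i) * (A i * (r * W)))) := by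
        simp only [mul_assoc]
      rw [l1, l2, Matrix.trace_mul_comm]
    have c2 : ((star (A i * r) * (A i * r)) * W).trace
        = ((A i * ρ * star (A i)) * (U * W * star U)).trace := by
      rw [hEq, ← hBBt]
      have l1 : (star U * ((A i * r) * star (A i * r)) * U) * W
          = star U * (((A i * r) * star (A i * r)) * (U * W)) := by simp only [mul_assoc]
      have l2 : ((A i * r) * star (A i * r)) * (U * W * star U)
          = (((A i * r) * star (A i * r)) * (U * W)) * star U := by simp only [mul_assoc]
      rw [l1, l2, Matrix.trace_mul_comm]
    have c3 : ((A i * ρ * star (A i)) * (U * W * star U)).trace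
        = ((p i : ℂ)) * ((ρi i) * ((U * V₀) * Matrix.diagonal lam * star (U * V₀))).trace := by
      rw [← hρi i, Matrix.smul_mul, Matrix.trace_smul, smul_eq_mul]
      congr 2
      rw [hW, Matrix.star_mul]
      simp only [mul_assoc]
    rw [c1, c2, c3]
    rw [norm_mul, Complex.norm_real, Real.norm_eq_abs, abs_of_nonneg (hppos i)]
    by_cases hpz : p i = 0
    · simp [hpz]
    · have hplt : 0 < p i := lt_of_le_of_ne (hppos i) (Ne.symm hpz)
      apply mul_le_mul_of_nonneg_left _ (hppos i)
      -- ρi i is PSD with trace 1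
      have hρiPS : (ρi i).PosSemidef := by
        have h1 : ρi i = (((p i)⁻¹ : ℝ) : ℂ) • (A i * ρ * star (A i)) := by
          rw [← hρi i, smul_smul, ← Complex.ofReal_mul, inv_mul_cancel₀ hpz,
            Complex.ofReal_one, one_smul]
        rw [h1]
        exact my_smul_posSemidef (hQps i) (by positivity)
      have hρitr : ((ρi i).trace).re = 1 := by
        have h2 := congrArg Matrix.trace (hρi i)
        rw [Matrix.trace_smul, ← hp i, smul_eq_mul] at h2
        have hcast : ((p i : ℝ) : ℂ) ≠ 0 := Complex.ofReal_ne_zero.mpr hpz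
        have h3 : (ρi i).trace = 1 :=
          mul_left_cancel₀ hcast (h2.trans (mul_one _).symm)
        rw [h3]
        simp
      -- the bounded membership
      have hmem : ‖(ρi i * ((U * V₀) * Matrix.diagonal lam * star (U * V₀))).trace‖
          ∈ {x : ℝ | ∃ V ∈ Matrix.unitaryGroup (Fin d) ℂ,
            x = ‖(ρi i * (V * Matrix.diagonal lam * star V)).trace‖} :=
        ⟨U * V₀, mul_mem hU hV₀, rfl⟩
      have hbdd : BddAbove {x : ℝ | ∃ V ∈ Matrix.unitaryGroup (Fin d) ℂ,
          x = ‖(ρi i * (V * Matrix.diagonal lam * star V)).trace‖} := by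
        refine ⟨1, ?_⟩
        rintro y ⟨V, hV, rfl⟩
        have := my_trace_bound lam hlam hρiPS V hV
        rwa [hρitr] at this
      exact le_csSup hbdd hmem
  calc ‖(ρ * W).trace‖
      = ‖∑ i, ((star (A i) * A i) * (r * W * r)).trace‖ := by rw [hsplit]
    _ ≤ ∑ i, ‖((star (A i) * A i) * (r * W * r)).trace‖ := norm_sum_le _ _
    _ ≤ ∑ i, p i * sSup {x : ℝ | ∃ V ∈ Matrix.unitaryGroup (Fin d) ℂ,
        x = ‖(ρi i * (V * Matrix.diagonal lam * star V)).trace‖} :=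
        Finset.sum_le_sum fun i _ => key i
end

section
/- For any 0 < s ≤ 1 and d ≥ 2, the probability vector q = (1−√(1−s))·(1/d,…,1/d) + √(1−s)·e_1 satisfies 1 − |⟨λ, q_σ⟩|² = s for every permutation σ (where q_σ is σ applied to q, λ_j = e^{2πij/d}), and its linear entropy satisfies 1 − ∑ q_j² = s(d−1)/d. -/
open Complex Real

/-- The interpolating probability vector
`q = (1−√(1−s))·(1/d,…,1/d) + √(1−s)·e₁` satisfies `1 − |⟨λ, q_σ⟩|² = s` for every
permutation `σ` (with `λ_j = e^{2πij/d}`), and its linear entropy satisfies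
`1 − ∑ q_j² = s(d−1)/d`. -/
theorem interpolating_vector_stellar_value (d : ℕ) (hd : 2 ≤ d) (s : ℝ)
    (hs0 : 0 < s) (hs1 : s ≤ 1)
    (q : Fin d → ℝ)
    (hq : ∀ j : Fin d, q j = (1 - Real.sqrt (1 - s)) * (1 / d) +
      (if (j : ℕ) = 0 then Real.sqrt (1 - s) else 0))
    (lam : Fin d → ℂ)
    (hlam : ∀ j : Fin d, lam j = Complex.exp (2 * π * Complex.I * ((j.val : ℝ) + 1) / d)) :
    (∀ σ : Equiv.Perm (Fin d),
      1 - (‖∑ j : Fin d, lam j * (q (σ j) : ℂ)‖) ^ 2 = s) ∧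
    1 - ∑ j, (q j) ^ 2 = s * ((d : ℝ) - 1) / d := by
  haveI : NeZero d := ⟨by omega⟩
  have hdR : (d:ℝ) ≠ 0 := Nat.cast_ne_zero.mpr (by omega)
  have hdC : (d:ℂ) ≠ 0 := Nat.cast_ne_zero.mpr (by omega)
  set t := Real.sqrt (1 - s) with htdef
  have ht0 : 0 ≤ t := Real.sqrt_nonneg _
  have ht2 : t ^ 2 = 1 - s := Real.sq_sqrt (by linarith)
  -- primitive root
  have hprim : IsPrimitiveRoot (Complex.exp (2 * π * Complex.I / d)) d :=
    Complex.isPrimitiveRoot_exp d (by omega)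
  have hzeta : ∀ j : Fin d, lam j = Complex.exp (2 * π * Complex.I / d) ^ (j.val + 1) := by
    intro j
    rw [hlam, ← Complex.exp_nat_mul]
    congr 1
    push_cast
    ring
  have habs : ∀ j : Fin d, ‖lam j‖ = 1 := by
    intro j
    rw [hzeta j, norm_pow, Complex.norm_exp]
    have : (2 * π * Complex.I / d).re = 0 := by
      simp [Complex.div_re]
    rw [this, Real.exp_zero, one_pow]
  have hsum0 : ∑ j : Fin d, lam j = 0 := by
    have hg : ∑ i ∈ Finset.range d, Complex.exp (2 * π * Complex.I / d) ^ i = 0 :=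
      hprim.geom_sum_eq_zero (by omega)
    calc ∑ j : Fin d, lam j
        = ∑ j : Fin d, Complex.exp (2 * π * Complex.I / d) ^ (j.val + 1) := by
          exact Finset.sum_congr rfl fun j _ => hzeta j
      _ = ∑ i ∈ Finset.range d, Complex.exp (2 * π * Complex.I / d) ^ (i + 1) := by
          rw [Finset.sum_range fun i => Complex.exp (2 * π * Complex.I / d) ^ (i + 1)]
      _ = Complex.exp (2 * π * Complex.I / d) *
            ∑ i ∈ Finset.range d, Complex.exp (2 * π * Complex.I / d) ^ i := by
          rw [Finset.mul_sum]
          exact Finset.sum_congr rfl fun i _ => by ring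
      _ = 0 := by rw [hg, mul_zero]
  constructor
  · intro σ
    have hcond : ∀ j : Fin d, ((σ j : ℕ) = 0) ↔ j = σ⁻¹ 0 := by
      intro j
      rw [Equiv.Perm.inv_def, Equiv.eq_symm_apply, Fin.ext_iff, Fin.val_zero]
    have hS : ∑ j : Fin d, lam j * (q (σ j) : ℂ) = (t : ℂ) * lam (σ⁻¹ 0) := by
      have : ∀ j : Fin d, lam j * (q (σ j) : ℂ)
          = ((1 - t) * (1 / d) : ℝ) * lam j + (if j = σ⁻¹ 0 then (t:ℂ) * lam j else 0) := by
        intro j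
        rw [hq (σ j)]
        by_cases h : j = σ⁻¹ 0
        · rw [if_pos h, if_pos ((hcond j).mpr h)]
          push_cast
          ring
        · rw [if_neg h, if_neg (fun hc => h ((hcond j).mp hc))]
          push_cast
          ring
      rw [Finset.sum_congr rfl fun j _ => this j, Finset.sum_add_distrib,
        ← Finset.mul_sum, hsum0, mul_zero, zero_add,
        Finset.sum_ite_eq' Finset.univ (σ⁻¹ 0) (fun j => (t:ℂ) * lam j),
        if_pos (Finset.mem_univ _)]
    rw [hS, norm_mul, habs, mul_one, Complex.norm_real, Real.norm_eq_abs, _root_.abs_of_nonneg ht0]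
    linarith
  · have hsum : ∑ j, (q j) ^ 2 = (d:ℝ) * ((1 - t) * (1/d))^2 + 2 * ((1-t)*(1/d)) * t + t^2 := by
      have : ∀ j : Fin d, (q j) ^ 2 = ((1 - t) * (1/d))^2 +
          (if j = (0 : Fin d) then 2 * ((1-t)*(1/d)) * t + t^2 else 0) := by
        intro j
        rw [hq j]
        by_cases h : j = (0 : Fin d)
        · rw [if_pos h, if_pos (by simp [h])]
          ring
        · rw [if_neg (by rw [Fin.ext_iff, Fin.val_zero] at h; exact h), if_neg h]
          ring
      rw [Finset.sum_congr rfl fun j _ => this j, Finset.sum_add_distrib,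
        Finset.sum_const, Finset.card_univ, Fintype.card_fin,
        Finset.sum_ite_eq' Finset.univ (0 : Fin d) _, if_pos (Finset.mem_univ _)]
      push_cast
      ring
    rw [hsum, show s = 1 - t ^ 2 from by linarith]
    field_simp
    ring
end
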